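/- Let A be an Artin algebra and 0 → G → P → G' → 0 an exact sequence of finitely generated left A-modules where G is Gorenstein-projective, P is projective, and the map G → P is a left add(A)-approximation of G. Then G' is Gorenstein-projective. -/

import Mathlib

universe u
open CategoryTheory

section GP
variable (R : Type u) [Ring R]

/-- A module is Gorenstein-projective if it is (isomorphic to) a cocycle of a totally acyclic
complex of finitely generated projective modules, i.e. an acyclic complex of finitely generated
projectives which stays acyclic after applying `Hom(-, R)`. -/
def IsGorensteinProjective (G : Type u) [AddCommGroup G] [Module R G] : Prop :=
  ∃ (P : ℤ → ModuleCat.{u} R) (d : ∀ n, P n ⟶ P (n + 1)),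
    (∀ n, Module.Finite R (P n)) ∧ (∀ n, Module.Projective R (P n)) ∧
    (∀ n, LinearMap.range (d n).hom = LinearMap.ker (d (n + 1)).hom) ∧
    (∀ (n : ℤ) (g : P (n + 1) →ₗ[R] R), g.comp (d n).hom = 0 →
      ∃ h : P (n + 1 + 1) →ₗ[R] R, h.comp (d (n + 1)).hom = g) ∧
    Nonempty (G ≃ₗ[R] LinearMap.ker (d 0).hom)

/-- A module `M` is semi-Gorenstein-projective if `Ext^i(M, R) = 0` for all `i ≥ 1`. -/
def IsSemiGP (M : Type u) [AddCommGroup M] [Module R M] : Prop :=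
  ∀ i : ℕ, 1 ≤ i →
    Subsingleton (((Ext ℤ (ModuleCat.{u} R) i).obj
      (Opposite.op (ModuleCat.of R M))).obj (ModuleCat.of R R))

/-- A ring is left weakly Gorenstein if every finitely generated semi-Gorenstein-projective
left module is Gorenstein-projective. -/
def LeftWeaklyGorenstein : Prop :=
  ∀ (M : Type u) (_ : AddCommGroup M) (_ : Module R M), Module.Finite R M →
    IsSemiGP R M → IsGorensteinProjective R M

end GP

section Approx
variable (R : Type u) [Ring R] (M : Type u) [AddCommGroup M] [Module R M]
variable (P : Type u) [AddCommGroup P] [Module R P]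

/-- `f : M → P` is a left `add R`-approximation: `P` is a finitely generated projective
module (i.e. `P ∈ add R`), and every homomorphism from `M` to a finitely generated
projective module factors through `f`. -/
def IsLeftAddApprox (f : M →ₗ[R] P) : Prop :=
  Module.Finite R P ∧ Module.Projective R P ∧
  ∀ (Q : Type u) (_ : AddCommGroup Q) (_ : Module R Q), Module.Finite R Q →
    Module.Projective R Q → ∀ g : M →ₗ[R] Q, ∃ h : P →ₗ[R] Q, h.comp f = g
end Approx

open LinearMap

section Chase
variable {A : Type u} [Ring A]
variable {M0 M1 M2 M3 Pa GG : Type u}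
variable [AddCommGroup M0] [Module A M0] [AddCommGroup M1] [Module A M1]
variable [AddCommGroup M2] [Module A M2] [AddCommGroup M3] [Module A M3]
variable [AddCommGroup Pa] [Module A Pa] [AddCommGroup GG] [Module A GG]
variable (d0 : M0 →ₗ[A] M1) (d1 : M1 →ₗ[A] M2) (d2 : M2 →ₗ[A] M3)
variable (u : GG →ₗ[A] M0) (f : GG →ₗ[A] Pa)
variable (h : Pa →ₗ[A] M0) (k : M0 →ₗ[A] Pa) (xi : M1 →ₗ[A] M0)

def betaMap : Pa →ₗ[A] M1 × Pa := (d0 ∘ₗ h).prod (LinearMap.id - k ∘ₗ h)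

def gammaMap : (M1 × Pa) →ₗ[A] M2 × M0 :=
  (d1 ∘ₗ LinearMap.fst A M1 Pa).prod
    (h ∘ₗ LinearMap.snd A M1 Pa - xi ∘ₗ LinearMap.fst A M1 Pa)

def deltaMap : (M2 × M0) →ₗ[A] M3 := d2 ∘ₗ LinearMap.fst A M2 M0

@[simp] lemma betaMap_apply (x : Pa) : betaMap d0 h k x = (d0 (h x), x - k (h x)) := rfl
@[simp] lemma gammaMap_apply (zw : M1 × Pa) :
    gammaMap d1 h xi zw = (d1 zw.1, h zw.2 - xi zw.1) := rfl
@[simp] lemma deltaMap_apply (ab : M2 × M0) : deltaMap d2 ab = d2 ab.1 := rfl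

lemma ker_betaMap (hu : range u = ker d0) (hh : h ∘ₗ f = u) (hk : k ∘ₗ u = f) :
    ker (betaMap d0 h k) = range f := by
  ext x
  simp only [mem_ker, mem_range, betaMap_apply, Prod.mk_eq_zero]
  constructor
  · rintro ⟨h1, h2⟩
    have hmem : h x ∈ range u := by rw [hu]; exact h1
    obtain ⟨s, hs⟩ := hmem
    refine ⟨s, ?_⟩
    have hks := LinearMap.congr_fun hk s
    simp only [LinearMap.coe_comp, Function.comp_apply] at hks
    rw [sub_eq_zero] at h2
    rw [← hks, hs, ← h2]
  · rintro ⟨s, rfl⟩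
    have hhs := LinearMap.congr_fun hh s
    have hks := LinearMap.congr_fun hk s
    simp only [LinearMap.coe_comp, Function.comp_apply] at hhs hks
    constructor
    · rw [hhs]
      have : u s ∈ ker d0 := by rw [← hu]; exact ⟨s, rfl⟩
      exact this
    · rw [hhs, hks, sub_self]

lemma range_betaMap (hex0 : range d0 = ker d1)
    (hxi : xi ∘ₗ d0 = LinearMap.id - h ∘ₗ k) :
    range (betaMap d0 h k) = ker (gammaMap d1 h xi) := by
  have hxi' : ∀ y, xi (d0 y) = y - h (k y) := by
    intro y
    have := LinearMap.congr_fun hxi y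
    simpa using this
  have hd10 : ∀ y, d1 (d0 y) = 0 := by
    intro y
    have : d0 y ∈ ker d1 := by rw [← hex0]; exact ⟨y, rfl⟩
    exact this
  ext zw
  obtain ⟨z, w⟩ := zw
  simp only [mem_ker, mem_range, betaMap_apply, gammaMap_apply, Prod.mk.injEq,
    Prod.mk_eq_zero]
  constructor
  · rintro ⟨x, hx1, hx2⟩
    subst hx1; subst hx2
    refine ⟨hd10 _, ?_⟩
    rw [map_sub, hxi' (h x)]
    abel
  · rintro ⟨h1, h2⟩
    have hz : z ∈ range d0 := by rw [hex0]; exact h1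
    obtain ⟨y, hy⟩ := hz
    have hw : h w = xi z := by rwa [sub_eq_zero] at h2
    have hhx : h (w + k y) = y := by
      rw [map_add, hw, ← hy, hxi' y]; abel
    exact ⟨w + k y, by rw [hhx]; exact hy, by rw [hhx]; abel⟩

lemma range_gammaMap (hex1 : range d1 = ker d2) (hd10 : ∀ x, d1 (d0 x) = 0)
    (hxi : xi ∘ₗ d0 = LinearMap.id - h ∘ₗ k) :
    range (gammaMap d1 h xi) = ker (deltaMap d2) := by
  have hxi' : ∀ y, xi (d0 y) = y - h (k y) := by
    intro y
    have := LinearMap.congr_fun hxi y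
    simpa using this
  ext ab
  obtain ⟨a, b⟩ := ab
  simp only [mem_ker, mem_range, gammaMap_apply, deltaMap_apply, Prod.mk.injEq]
  constructor
  · rintro ⟨⟨z, w⟩, hz1, hz2⟩
    have : d1 z ∈ ker d2 := by rw [← hex1]; exact ⟨z, rfl⟩
    simp only at hz1
    rw [← hz1]; exact this
  · intro h2
    have ha : a ∈ range d1 := by rw [hex1]; exact h2
    obtain ⟨z₀, hz₀⟩ := ha
    refine ⟨(z₀ - d0 (b + xi z₀), k (b + xi z₀)), ?_, ?_⟩
    · simp only
      rw [map_sub, hz₀, hd10, sub_zero]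
    · simp only
      rw [map_sub, hxi' (b + xi z₀)]
      abel

lemma range_deltaMap : range (deltaMap (M0 := M0) d2) = range d2 := by
  ext y
  simp only [mem_range, deltaMap_apply]
  constructor
  · rintro ⟨⟨a, b⟩, rfl⟩; exact ⟨a, rfl⟩
  · rintro ⟨a, rfl⟩; exact ⟨(a, 0), rfl⟩

lemma lift_neg2 (g' : Pa →ₗ[A] A) (δ₁ : M1 →ₗ[A] A) (hδ : δ₁ ∘ₗ d0 = g' ∘ₗ k) :
    (δ₁ ∘ₗ LinearMap.fst A M1 Pa + g' ∘ₗ LinearMap.snd A M1 Pa) ∘ₗ betaMap d0 h k = g' := by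
  apply LinearMap.ext; intro x
  have hδx := LinearMap.congr_fun hδ (h x)
  simp only [LinearMap.coe_comp, Function.comp_apply] at hδx
  simp only [LinearMap.coe_comp, Function.comp_apply, LinearMap.add_apply, betaMap_apply, fst_apply, snd_apply,
    map_sub, hδx]
  abel

lemma lift_neg1_aux (γ₁ : M1 →ₗ[A] A) (γ₂ : Pa →ₗ[A] A)
    (hc : ∀ x, γ₁ (d0 (h x)) + γ₂ (x - k (h x)) = 0)
    (hxi : xi ∘ₗ d0 = LinearMap.id - h ∘ₗ k) :
    (γ₁ + (γ₂ ∘ₗ k - γ₁ ∘ₗ d0) ∘ₗ xi) ∘ₗ d0 = 0 := by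
  have hxi' : ∀ y, xi (d0 y) = y - h (k y) := by
    intro y
    have := LinearMap.congr_fun hxi y
    simpa using this
  apply LinearMap.ext; intro y
  have hc' := hc (k y)
  simp only [map_sub] at hc'
  simp only [LinearMap.coe_comp, Function.comp_apply, LinearMap.add_apply, LinearMap.sub_apply, LinearMap.zero_apply, hxi' y,
    map_sub]
  linear_combination (norm := abel) hc'

lemma lift_neg1 (γ₁ : M1 →ₗ[A] A) (γ₂ : Pa →ₗ[A] A)
    (hc : ∀ x, γ₁ (d0 (h x)) + γ₂ (x - k (h x)) = 0)
    (δ₁ : M2 →ₗ[A] A)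
    (hδ₁ : δ₁ ∘ₗ d1 = γ₁ + (γ₂ ∘ₗ k - γ₁ ∘ₗ d0) ∘ₗ xi) :
    (δ₁ ∘ₗ LinearMap.fst A M2 M0 + (γ₂ ∘ₗ k - γ₁ ∘ₗ d0) ∘ₗ LinearMap.snd A M2 M0)
      ∘ₗ gammaMap d1 h xi
      = γ₁ ∘ₗ LinearMap.fst A M1 Pa + γ₂ ∘ₗ LinearMap.snd A M1 Pa := by
  apply LinearMap.ext
  rintro ⟨z, w⟩
  have hδz := LinearMap.congr_fun hδ₁ z
  have hcw := hc w
  simp only [LinearMap.coe_comp, Function.comp_apply, LinearMap.add_apply, LinearMap.sub_apply, fst_apply, snd_apply,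
    map_sub] at hδz hcw ⊢
  simp only [gammaMap, LinearMap.coe_comp, Function.comp_apply, prod_apply, Function.prod, LinearMap.add_apply,
    LinearMap.sub_apply, fst_apply, snd_apply, map_sub]
  linear_combination (norm := abel) hδz - hcw

lemma lift_zero (γ₁ : M2 →ₗ[A] A) (γ₂ : M0 →ₗ[A] A)
    (hc : ∀ (z : M1) (w : Pa), γ₁ (d1 z) + γ₂ (h w - xi z) = 0)
    (hxi : xi ∘ₗ d0 = LinearMap.id - h ∘ₗ k)
    (hd10 : ∀ x, d1 (d0 x) = 0) :
    γ₂ = 0 ∧ γ₁ ∘ₗ d1 = 0 := by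
  have hxi' : ∀ y, xi (d0 y) = y - h (k y) := by
    intro y
    have := LinearMap.congr_fun hxi y
    simpa using this
  have hγ₂h : ∀ w, γ₂ (h w) = 0 := by
    intro w
    have := hc 0 w
    simpa using this
  have hγ₁d : ∀ z, γ₁ (d1 z) = γ₂ (xi z) := by
    intro z
    have := hc z 0
    simp only [map_zero, zero_sub, map_neg, map_sub] at this
    exact add_neg_eq_zero.mp this
  have hγ₂ : γ₂ = 0 := by
    apply LinearMap.ext; intro y
    have h1 := hγ₁d (d0 y)
    rw [hd10, map_zero] at h1
    rw [hxi' y, map_sub] at h1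
    have h2 := hγ₂h (k y)
    simp only [LinearMap.zero_apply]
    have h3 : γ₂ y = γ₂ (h (k y)) := by
      have := h1.symm
      rw [sub_eq_zero] at this
      exact this
    rw [h3, h2]
  refine ⟨hγ₂, ?_⟩
  apply LinearMap.ext; intro z
  simp only [LinearMap.coe_comp, Function.comp_apply, LinearMap.zero_apply, hγ₁d z, hγ₂, LinearMap.zero_apply]
end Chase
section Junction
variable {A : Type u} [Ring A]
variable {Mm2 Mm1 M0 M1 M2 M3 Pa GG : Type u}
variable [AddCommGroup Mm2] [Module A Mm2] [AddCommGroup Mm1] [Module A Mm1]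
variable [AddCommGroup M0] [Module A M0] [AddCommGroup M1] [Module A M1]
variable [AddCommGroup M2] [Module A M2] [AddCommGroup M3] [Module A M3]
variable [AddCommGroup Pa] [Module A Pa] [AddCommGroup GG] [Module A GG]

lemma ker_fpi (dm2 : Mm2 →ₗ[A] Mm1) (dm1 : Mm1 →ₗ[A] M0)
    (π : Mm1 →ₗ[A] GG) (u : GG →ₗ[A] M0) (f : GG →ₗ[A] Pa)
    (hf : Function.Injective f) (hu_inj : Function.Injective u)
    (huπ : ∀ x, u (π x) = dm1 x)
    (hexm2 : LinearMap.range dm2 = LinearMap.ker dm1) :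
    LinearMap.range dm2 = LinearMap.ker (f ∘ₗ π) := by
  ext x
  simp only [LinearMap.mem_ker, LinearMap.coe_comp, Function.comp_apply]
  constructor
  · intro hx
    have h1 : dm1 x = 0 := by
      have : x ∈ LinearMap.ker dm1 := by rw [← hexm2]; exact hx
      exact this
    have h2 : u (π x) = 0 := by rw [huπ x, h1]
    have h3 : π x = 0 := hu_inj (by rw [h2, map_zero])
    rw [h3, map_zero]
  · intro hx
    have h3 : π x = 0 := hf (by rw [hx, map_zero])
    have h2 : dm1 x = 0 := by rw [← huπ x, h3, map_zero]
    have : x ∈ LinearMap.ker dm1 := h2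
    rw [← hexm2] at this
    exact this

lemma range_fpi (f : GG →ₗ[A] Pa) (π : Mm1 →ₗ[A] GG) (hπ : Function.Surjective π) :
    LinearMap.range (f ∘ₗ π) = LinearMap.range f := by
  ext y
  simp only [LinearMap.mem_range, LinearMap.coe_comp, Function.comp_apply]
  constructor
  · rintro ⟨x, rfl⟩; exact ⟨π x, rfl⟩
  · rintro ⟨s, rfl⟩
    obtain ⟨x, rfl⟩ := hπ s
    exact ⟨x, rfl⟩

lemma gl_dec (gl : (M1 × M0) →ₗ[A] A) (a : M1) (b : M0) :
    gl (a, b) = (gl ∘ₗ LinearMap.inl A M1 M0) a + (gl ∘ₗ LinearMap.inr A M1 M0) b := by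
  simp only [LinearMap.coe_comp, Function.comp_apply, LinearMap.inl_apply,
    LinearMap.inr_apply]
  rw [← map_add, Prod.mk_add_mk, add_zero, zero_add]

lemma junction_zero (d0 : M0 →ₗ[A] M1) (d1 : M1 →ₗ[A] M2) (d2 : M2 →ₗ[A] M3)
    (h : Pa →ₗ[A] M0) (k : M0 →ₗ[A] Pa) (xi : M1 →ₗ[A] M0)
    (gl : (M2 × M0) →ₗ[A] A)
    (hgz : gl ∘ₗ gammaMap d1 h xi = 0)
    (hxi : xi ∘ₗ d0 = LinearMap.id - h ∘ₗ k)
    (hd10 : ∀ x, d1 (d0 x) = 0)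
    (lift1 : ∀ γ : M2 →ₗ[A] A, γ ∘ₗ d1 = 0 → ∃ δ : M3 →ₗ[A] A, δ ∘ₗ d2 = γ) :
    ∃ hW : M3 →ₗ[A] A, hW ∘ₗ deltaMap d2 = gl := by
  have hc : ∀ (z : M1) (w : Pa),
      (gl ∘ₗ LinearMap.inl A M2 M0) (d1 z) + (gl ∘ₗ LinearMap.inr A M2 M0) (h w - xi z) = 0 := by
    intro z w
    have := LinearMap.congr_fun hgz (z, w)
    simp only [LinearMap.coe_comp, Function.comp_apply, gammaMap_apply,
      LinearMap.zero_apply] at this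
    rw [← gl_dec]; exact this
  obtain ⟨hzγ₂, hzγ₁⟩ := lift_zero d0 d1 h k xi _ _ hc hxi hd10
  obtain ⟨δ', hδ'⟩ := lift1 _ hzγ₁
  refine ⟨δ', ?_⟩
  apply LinearMap.ext
  rintro ⟨a, b⟩
  have h1 := LinearMap.congr_fun hδ' a
  simp only [LinearMap.coe_comp, Function.comp_apply] at h1
  simp only [LinearMap.coe_comp, Function.comp_apply, deltaMap_apply]
  rw [gl_dec gl a b, hzγ₂]
  simp only [LinearMap.zero_apply, add_zero]
  exact h1

lemma junction_neg1 (d0 : M0 →ₗ[A] M1) (d1 : M1 →ₗ[A] M2)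
    (h : Pa →ₗ[A] M0) (k : M0 →ₗ[A] Pa) (xi : M1 →ₗ[A] M0)
    (gl : (M1 × Pa) →ₗ[A] A)
    (hgz : gl ∘ₗ betaMap d0 h k = 0)
    (hxi : xi ∘ₗ d0 = LinearMap.id - h ∘ₗ k)
    (lift0 : ∀ γ : M1 →ₗ[A] A, γ ∘ₗ d0 = 0 → ∃ δ : M2 →ₗ[A] A, δ ∘ₗ d1 = γ) :
    ∃ hW : (M2 × M0) →ₗ[A] A, hW ∘ₗ gammaMap d1 h xi = gl := by
  set γ₁ : M1 →ₗ[A] A := gl ∘ₗ LinearMap.inl A M1 Pa with hγ₁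
  set γ₂ : Pa →ₗ[A] A := gl ∘ₗ LinearMap.inr A M1 Pa with hγ₂
  have hc : ∀ x, γ₁ (d0 (h x)) + γ₂ (x - k (h x)) = 0 := by
    intro x
    have := LinearMap.congr_fun hgz x
    simp only [LinearMap.coe_comp, Function.comp_apply, betaMap_apply,
      LinearMap.zero_apply] at this
    rw [hγ₁, hγ₂, ← gl_dec]; exact this
  have haux := lift_neg1_aux d0 h k xi γ₁ γ₂ hc hxi
  obtain ⟨δ₁, hδ₁⟩ := lift0 _ haux
  refine ⟨δ₁ ∘ₗ LinearMap.fst A M2 M0 + (γ₂ ∘ₗ k - γ₁ ∘ₗ d0) ∘ₗ LinearMap.snd A M2 M0, ?_⟩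
  rw [lift_neg1 d0 d1 h k xi γ₁ γ₂ hc δ₁ hδ₁]
  apply LinearMap.ext
  rintro ⟨z, w⟩
  simp only [LinearMap.add_apply, LinearMap.coe_comp, Function.comp_apply,
    LinearMap.fst_apply, LinearMap.snd_apply]
  rw [hγ₁, hγ₂]
  exact (gl_dec gl z w).symm

lemma junction_neg2 (dm1 : Mm1 →ₗ[A] M0) (d0 : M0 →ₗ[A] M1)
    (π : Mm1 →ₗ[A] GG) (u : GG →ₗ[A] M0) (f : GG →ₗ[A] Pa)
    (h : Pa →ₗ[A] M0) (k : M0 →ₗ[A] Pa)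
    (gl : Pa →ₗ[A] A) (hgz : gl ∘ₗ (f ∘ₗ π) = 0)
    (hπ : Function.Surjective π) (huπ : ∀ x, u (π x) = dm1 x) (hk : k ∘ₗ u = f)
    (liftm1 : ∀ γ : M0 →ₗ[A] A, γ ∘ₗ dm1 = 0 → ∃ δ : M1 →ₗ[A] A, δ ∘ₗ d0 = γ) :
    ∃ hW : (M1 × Pa) →ₗ[A] A, hW ∘ₗ betaMap d0 h k = gl := by
  have hgf : ∀ s, gl (f s) = 0 := by
    intro s
    obtain ⟨x, rfl⟩ := hπ s
    have := LinearMap.congr_fun hgz x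
    simpa using this
  have hpre : (gl ∘ₗ k) ∘ₗ dm1 = 0 := by
    apply LinearMap.ext; intro x
    have h1 : k (dm1 x) = f (π x) := by
      rw [← huπ x]
      have := LinearMap.congr_fun hk (π x)
      simpa using this
    simp only [LinearMap.coe_comp, Function.comp_apply, LinearMap.zero_apply]
    rw [h1]
    exact hgf (π x)
  obtain ⟨δ₁, hδ₁⟩ := liftm1 (gl ∘ₗ k) hpre
  exact ⟨δ₁ ∘ₗ LinearMap.fst A M1 Pa + gl ∘ₗ LinearMap.snd A M1 Pa,
    lift_neg2 d0 h k gl δ₁ hδ₁⟩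

lemma junction_neg3 (dm1 : Mm1 →ₗ[A] M0) (π : Mm1 →ₗ[A] GG) (u : GG →ₗ[A] M0)
    (f : GG →ₗ[A] Pa) (gl : Mm1 →ₗ[A] A)
    (huπ : ∀ x, u (π x) = dm1 x)
    (h0 : M0 →ₗ[A] A) (hh0 : h0 ∘ₗ dm1 = gl)
    (h1 : Pa →ₗ[A] A) (hh1 : h1 ∘ₗ f = h0 ∘ₗ u) :
    h1 ∘ₗ (f ∘ₗ π) = gl := by
  apply LinearMap.ext; intro x
  have e1 := LinearMap.congr_fun hh1 (π x)
  have e2 := LinearMap.congr_fun hh0 x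
  simp only [LinearMap.coe_comp, Function.comp_apply] at e1 e2 ⊢
  rw [e1, huπ x]
  exact e2
end Junction
section Extend
variable {A : Type u} [Ring A]

lemma extend_lemma (T : ℤ → ModuleCat.{u} A) (dd : ∀ n, T n ⟶ T (n+1))
    (hTlift : ∀ (n : ℤ) (g : T (n + 1) →ₗ[A] A), g.comp (dd n).hom = 0 →
      ∃ h : T (n + 1 + 1) →ₗ[A] A, h.comp (dd (n + 1)).hom = g)
    (n : ℤ) (Q : Type u) [AddCommGroup Q] [Module A Q]
    [Module.Finite A Q] [Module.Projective A Q]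
    (γ : ↥(T (n+1)) →ₗ[A] Q) (hγ : γ.comp (dd n).hom = 0) :
    ∃ δ : ↥(T (n+1+1)) →ₗ[A] Q, δ.comp (dd (n+1)).hom = γ := by
  obtain ⟨m, q, hq⟩ := Module.Finite.exists_fin' A Q
  obtain ⟨s, hs⟩ := Module.projective_lifting_property q LinearMap.id hq
  have hz : ∀ i : Fin m, ((LinearMap.proj i ∘ₗ (s ∘ₗ γ)) : ↥(T (n+1)) →ₗ[A] A).comp (dd n).hom = 0 := by
    intro i
    apply LinearMap.ext; intro x
    have := LinearMap.congr_fun hγ x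
    simp only [LinearMap.coe_comp, Function.comp_apply, LinearMap.zero_apply] at this ⊢
    rw [this]
    simp
  choose H hH using fun i : Fin m => hTlift n (LinearMap.proj i ∘ₗ (s ∘ₗ γ)) (hz i)
  refine ⟨q ∘ₗ LinearMap.pi H, ?_⟩
  apply LinearMap.ext; intro x
  have h1 : ∀ i, H i ((dd (n+1)).hom x) = s (γ x) i := by
    intro i
    have := LinearMap.congr_fun (hH i) x
    simpa using this
  have h2 := LinearMap.congr_fun hs (γ x)
  simp only [LinearMap.coe_comp, Function.comp_apply, LinearMap.id_coe, id_eq] at h2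
  simp only [LinearMap.coe_comp, Function.comp_apply, LinearMap.pi_apply]
  calc q (fun i => H i ((dd (n+1)).hom x)) = q (fun i => s (γ x) i) := by
        congr 1; funext i; exact h1 i
    _ = q (s (γ x)) := rfl
    _ = γ x := h2
end Extend

section AuxCD
variable {A : Type u} [Ring A]

def auxC (T : ℤ → ModuleCat.{u} A) (Pm : ModuleCat.{u} A) : ℤ → ModuleCat.{u} A
  | .ofNat 0 => ModuleCat.of A (↥(T 1) × ↥Pm)
  | .ofNat 1 => ModuleCat.of A (↥(T 2) × ↥(T 0))
  | .ofNat (n+2) => T ((n : ℤ) + 3)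
  | .negSucc 0 => Pm
  | .negSucc (n+1) => T (.negSucc n)

def auxD (T : ℤ → ModuleCat.{u} A) (dd : ∀ n, T n ⟶ T (n+1)) (Pm : ModuleCat.{u} A)
    (α : ↥(T (-1)) →ₗ[A] ↥Pm) (β : ↥Pm →ₗ[A] ↥(T 1) × ↥Pm)
    (γ : (↥(T 1) × ↥Pm) →ₗ[A] ↥(T 2) × ↥(T 0)) (δ : (↥(T 2) × ↥(T 0)) →ₗ[A] ↥(T 3)) :
    ∀ n : ℤ, auxC T Pm n ⟶ auxC T Pm (n+1)
  | .ofNat 0 => ModuleCat.ofHom γ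
  | .ofNat 1 => ModuleCat.ofHom δ
  | .ofNat (n+2) => dd ((n : ℤ) + 3)
  | .negSucc 0 => ModuleCat.ofHom β
  | .negSucc 1 => ModuleCat.ofHom α
  | .negSucc (n+2) => dd (.negSucc (n+1))
end AuxCD
section MainAux
variable {A : Type u} [Ring A]

lemma main_aux (G Pmod G' : Type u) [AddCommGroup G] [Module A G]
    [AddCommGroup Pmod] [Module A Pmod] [Module.Finite A Pmod] [Module.Projective A Pmod]
    [AddCommGroup G'] [Module A G']
    (T : ℤ → ModuleCat.{u} A) (dd : ∀ n, T n ⟶ T (n+1))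
    (hTfin : ∀ n, Module.Finite A (T n)) (hTproj : ∀ n, Module.Projective A (T n))
    (hTex : ∀ n, LinearMap.range (dd n).hom = LinearMap.ker (dd (n+1)).hom)
    (hTlift : ∀ (n : ℤ) (g : T (n + 1) →ₗ[A] A), g.comp (dd n).hom = 0 →
      ∃ h : T (n + 1 + 1) →ₗ[A] A, h.comp (dd (n + 1)).hom = g)
    (f : G →ₗ[A] Pmod) (g : Pmod →ₗ[A] G')
    (hf : Function.Injective f) (hg : Function.Surjective g)
    (hexact : LinearMap.range f = LinearMap.ker g)
    (d0 : ↥(T 0) →ₗ[A] ↥(T 1)) (d1 : ↥(T 1) →ₗ[A] ↥(T 2)) (d2 : ↥(T 2) →ₗ[A] ↥(T 3))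
    (hdd0 : d0 = (dd 0).hom) (hdd1 : d1 = (dd 1).hom) (hdd2 : d2 = (dd 2).hom)
    (u : G →ₗ[A] ↥(T 0)) (π : ↥(T (-1)) →ₗ[A] G)
    (hu_inj : Function.Injective u)
    (hu_range : LinearMap.range u = LinearMap.ker d0)
    (hπ : Function.Surjective π)
    (huπ : ∀ x, u (π x) = (dd (-1)).hom x)
    (h : Pmod →ₗ[A] ↥(T 0)) (k : ↥(T 0) →ₗ[A] Pmod) (xi : ↥(T 1) →ₗ[A] ↥(T 0))
    (hh : h ∘ₗ f = u) (hk : k ∘ₗ u = f)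
    (hxi : xi ∘ₗ d0 = LinearMap.id - h ∘ₗ k)
    (happA : ∀ gA : G →ₗ[A] A, ∃ hA : Pmod →ₗ[A] A, hA ∘ₗ f = gA) :
    IsGorensteinProjective A G' := by
  have hex0 : LinearMap.range d0 = LinearMap.ker d1 := by rw [hdd0, hdd1]; exact hTex 0
  have hex1 : LinearMap.range d1 = LinearMap.ker d2 := by rw [hdd1, hdd2]; exact hTex 1
  have hexm2 : LinearMap.range ((dd (-2)).hom : ↥(T (-2)) →ₗ[A] ↥(T (-1)))
      = LinearMap.ker ((dd (-1)).hom : ↥(T (-1)) →ₗ[A] ↥(T 0)) := hTex (-2)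
  have hd10 : ∀ x, d1 (d0 x) = 0 := by
    intro x
    have : d0 x ∈ LinearMap.ker d1 := by rw [← hex0]; exact ⟨x, rfl⟩
    exact this
  refine ⟨auxC T (ModuleCat.of A Pmod),
    auxD T dd (ModuleCat.of A Pmod) (f ∘ₗ π) (betaMap d0 h k) (gammaMap d1 h xi) (deltaMap d2),
    ?_, ?_, ?_, ?_, ?_⟩
  · -- finiteness
    intro n
    rcases n with (_ | _ | m) | (_ | m)
    · show Module.Finite A (↥(T 1) × Pmod)
      haveI := hTfin 1
      infer_instance
    · show Module.Finite A (↥(T 2) × ↥(T 0))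
      haveI := hTfin 2; haveI := hTfin 0
      infer_instance
    · exact hTfin _
    · show Module.Finite A Pmod
      infer_instance
    · exact hTfin _
  · -- projectivity
    intro n
    rcases n with (_ | _ | m) | (_ | m)
    · show Module.Projective A (↥(T 1) × Pmod)
      haveI := hTproj 1
      infer_instance
    · show Module.Projective A (↥(T 2) × ↥(T 0))
      haveI := hTproj 2; haveI := hTproj 0
      infer_instance
    · exact hTproj _
    · show Module.Projective A Pmod
      infer_instance
    · exact hTproj _
  · -- exactness
    intro n
    rcases n with (_ | _ | m) | (_ | _ | _ | m)
    · show LinearMap.range (gammaMap d1 h xi) = LinearMap.ker (deltaMap d2)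
      exact range_gammaMap d0 d1 d2 h k xi hex1 hd10 hxi
    · show LinearMap.range (deltaMap d2) = LinearMap.ker (dd ((2:ℤ)+1)).hom
      rw [range_deltaMap, hdd2]
      exact hTex 2
    · show LinearMap.range (dd ((m:ℤ)+3)).hom = LinearMap.ker (dd ((m:ℤ)+3+1)).hom
      exact hTex ((m : ℤ) + 3)
    · show LinearMap.range (betaMap d0 h k) = LinearMap.ker (gammaMap d1 h xi)
      exact range_betaMap d0 d1 h k xi hex0 hxi
    · show LinearMap.range (f ∘ₗ π) = LinearMap.ker (betaMap d0 h k)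
      rw [range_fpi f π hπ, ker_betaMap d0 u f h k hu_range hh hk]
    · show LinearMap.range ((dd (-2)).hom : ↥(T (-2)) →ₗ[A] ↥(T (-1)))
        = LinearMap.ker (f ∘ₗ π)
      exact ker_fpi ((dd (-2)).hom : ↥(T (-2)) →ₗ[A] ↥(T (-1)))
        ((dd (-1)).hom : ↥(T (-1)) →ₗ[A] ↥(T 0)) π u f hf hu_inj huπ hexm2
    · show LinearMap.range (dd (Int.negSucc (m+2))).hom
        = LinearMap.ker (dd (Int.negSucc (m+2) + 1)).hom
      exact hTex (Int.negSucc (m+2))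
  · -- lifting
    intro n
    rcases n with (_ | _ | m) | (_ | _ | _ | m)
    · -- junction 0
      show ∀ gl : (↥(T 2) × ↥(T 0)) →ₗ[A] A, gl ∘ₗ gammaMap d1 h xi = 0 →
        ∃ hW : ↥(T 3) →ₗ[A] A, hW ∘ₗ deltaMap d2 = gl
      intro gl hgz
      refine junction_zero d0 d1 d2 h k xi gl hgz hxi hd10 ?_
      intro γ hγ
      rw [hdd1] at hγ
      obtain ⟨δ, hδ⟩ := hTlift 1 γ hγ
      refine ⟨δ, ?_⟩
      rw [hdd2]
      exact hδ
    · -- junction 1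
      show ∀ gl : ↥(T 3) →ₗ[A] A, gl ∘ₗ deltaMap d2 = 0 →
        ∃ hW : ↥(T 4) →ₗ[A] A, hW ∘ₗ ((dd 3).hom : ↥(T 3) →ₗ[A] ↥(T 4)) = gl
      intro gl hgz
      have h1 : gl.comp (dd 2).hom = 0 := by
        rw [← hdd2]
        apply LinearMap.ext; intro a
        have := LinearMap.congr_fun hgz (a, (0 : ↥(T 0)))
        simpa using this
      obtain ⟨δ, hδ⟩ := hTlift 2 gl h1
      exact ⟨δ, hδ⟩
    · -- generic positive
      show ∀ gl : ↥(T ((m:ℤ)+3+1)) →ₗ[A] A, gl.comp (dd ((m:ℤ)+3)).hom = 0 →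
        ∃ hW : ↥(T ((m:ℤ)+3+1+1)) →ₗ[A] A, hW.comp (dd ((m:ℤ)+3+1)).hom = gl
      exact hTlift ((m:ℤ)+3)
    · -- junction -1
      show ∀ gl : (↥(T 1) × Pmod) →ₗ[A] A, gl ∘ₗ betaMap d0 h k = 0 →
        ∃ hW : (↥(T 2) × ↥(T 0)) →ₗ[A] A, hW ∘ₗ gammaMap d1 h xi = gl
      intro gl hgz
      refine junction_neg1 d0 d1 h k xi gl hgz hxi ?_
      intro γ hγ
      rw [hdd0] at hγ
      obtain ⟨δ, hδ⟩ := hTlift 0 γ hγ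
      refine ⟨δ, ?_⟩
      rw [hdd1]
      exact hδ
    · -- junction -2
      show ∀ gl : Pmod →ₗ[A] A, gl ∘ₗ (f ∘ₗ π) = 0 →
        ∃ hW : (↥(T 1) × Pmod) →ₗ[A] A, hW ∘ₗ betaMap d0 h k = gl
      intro gl hgz
      refine junction_neg2 ((dd (-1)).hom : ↥(T (-1)) →ₗ[A] ↥(T 0)) d0 π u f h k gl hgz hπ huπ hk ?_
      intro γ hγ
      obtain ⟨δ, hδ⟩ := hTlift (-1) γ hγ
      refine ⟨δ, ?_⟩
      rw [hdd0]
      exact hδ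
    · -- junction -3
      show ∀ gl : ↥(T (-1)) →ₗ[A] A,
        gl.comp ((dd (-2)).hom : ↥(T (-2)) →ₗ[A] ↥(T (-1))) = 0 →
        ∃ hW : Pmod →ₗ[A] A, hW ∘ₗ (f ∘ₗ π) = gl
      intro gl hgz
      have hTliftm2 : ∀ gl' : ↥(T (-1)) →ₗ[A] A,
          gl' ∘ₗ ((dd (-2)).hom : ↥(T (-2)) →ₗ[A] ↥(T (-1))) = 0 →
          ∃ h0 : ↥(T 0) →ₗ[A] A, h0 ∘ₗ ((dd (-1)).hom : ↥(T (-1)) →ₗ[A] ↥(T 0)) = gl' := by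
        exact hTlift (-2)
      obtain ⟨h0, hh0⟩ := hTliftm2 gl hgz
      obtain ⟨h1, hh1⟩ := happA (h0 ∘ₗ u)
      refine ⟨h1, junction_neg3 ((dd (-1)).hom : ↥(T (-1)) →ₗ[A] ↥(T 0)) π u f gl huπ h0 hh0 h1 hh1⟩
    · -- generic negative
      show ∀ gl : ↥(T (Int.negSucc (m+2) + 1)) →ₗ[A] A,
        gl.comp (dd (Int.negSucc (m+2))).hom = 0 →
        ∃ hW : ↥(T (Int.negSucc (m+2) + 1 + 1)) →ₗ[A] A,
          hW.comp (dd (Int.negSucc (m+2) + 1)).hom = gl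
      exact hTlift (Int.negSucc (m+2))
  · -- the equivalence
    have h1 : LinearMap.ker g = LinearMap.ker (betaMap d0 h k) := by
      rw [ker_betaMap d0 u f h k hu_range hh hk]; exact hexact.symm
    exact ⟨(LinearMap.quotKerEquivOfSurjective g hg).symm.trans
      ((Submodule.quotEquivOfEq _ _ h1).trans
        ((betaMap d0 h k).quotKerEquivRange.trans
          (LinearEquiv.ofEq _ _ (range_betaMap d0 d1 h k xi hex0 hxi))))⟩
end MainAux
section Core
variable {A : Type u} [Ring A]

lemma stmt2_core (G Pmod G' : Type u) [AddCommGroup G] [Module A G]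
    [AddCommGroup Pmod] [Module A Pmod] [Module.Finite A Pmod] [Module.Projective A Pmod]
    [AddCommGroup G'] [Module A G']
    (f : G →ₗ[A] Pmod) (g : Pmod →ₗ[A] G')
    (hf : Function.Injective f) (hg : Function.Surjective g)
    (hexact : LinearMap.range f = LinearMap.ker g)
    (T : ℤ → ModuleCat.{u} A) (dd : ∀ n, T n ⟶ T (n+1))
    (hTfin : ∀ n, Module.Finite A (T n)) (hTproj : ∀ n, Module.Projective A (T n))
    (hTex : ∀ n, LinearMap.range (dd n).hom = LinearMap.ker (dd (n+1)).hom)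
    (hTlift : ∀ (n : ℤ) (g : T (n + 1) →ₗ[A] A), g.comp (dd n).hom = 0 →
      ∃ h : T (n + 1 + 1) →ₗ[A] A, h.comp (dd (n + 1)).hom = g)
    (e : G ≃ₗ[A] ↥(LinearMap.ker ((dd 0).hom : ↥(T 0) →ₗ[A] ↥(T 1))))
    (happ : ∀ (Q : Type u) (_ : AddCommGroup Q) (_ : Module A Q), Module.Finite A Q →
      Module.Projective A Q → ∀ gq : G →ₗ[A] Q, ∃ h : Pmod →ₗ[A] Q, h.comp f = gq) :
    IsGorensteinProjective A G' := by
  classical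
  haveI := hTfin 0
  haveI := hTproj 0
  set D0 : ↥(T 0) →ₗ[A] ↥(T 1) := (dd 0).hom with hD0
  set D1 : ↥(T (-1)) →ₗ[A] ↥(T 0) := (dd (-1)).hom with hD1
  set D2 : ↥(T (-2)) →ₗ[A] ↥(T (-1)) := (dd (-2)).hom with hD2
  set K : Submodule A ↥(T 0) := LinearMap.ker D0 with hK
  have hexm1 : LinearMap.range D1 = K := by
    rw [hK, hD0, hD1]; exact hTex (-1)
  have hexm2 : LinearMap.range D2 = LinearMap.ker D1 := by
    rw [hD1, hD2]; exact hTex (-2)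
  have hmem : ∀ x, D1 x ∈ K := by
    intro x; rw [← hexm1]; exact ⟨x, rfl⟩
  set u : G →ₗ[A] ↥(T 0) := K.subtype ∘ₗ e.toLinearMap with hu
  set π : ↥(T (-1)) →ₗ[A] G := e.symm.toLinearMap ∘ₗ LinearMap.codRestrict K D1 hmem
    with hπdef
  have huapp : ∀ s, u s = ((e s : K) : ↥(T 0)) := by
    intro s
    rw [hu]
    simp
  have hu_inj : Function.Injective u := by
    intro a b hab
    rw [huapp, huapp] at hab
    exact e.injective (Subtype.ext hab)
  have hu_range : LinearMap.range u = K := by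
    ext y
    constructor
    · rintro ⟨s, rfl⟩
      rw [huapp]
      exact (e s).2
    · intro hy
      refine ⟨e.symm ⟨y, hy⟩, ?_⟩
      rw [huapp]
      simp
  have hπapp : ∀ x, π x = e.symm ⟨D1 x, hmem x⟩ := by
    intro x
    rw [hπdef]
    simp [LinearMap.codRestrict]
  have hπ_surj : Function.Surjective π := by
    intro s
    have h2 : ((e s : K) : ↥(T 0)) ∈ LinearMap.range D1 := by
      rw [hexm1]; exact (e s).2
    obtain ⟨x, hx⟩ := h2
    refine ⟨x, ?_⟩
    rw [hπapp]
    have h3 : (⟨D1 x, hmem x⟩ : K) = e s := Subtype.ext hx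
    rw [h3]
    simp
  have huπ : ∀ x, u (π x) = D1 x := by
    intro x
    rw [hπapp, huapp]
    simp
  obtain ⟨h, hh⟩ := happ (↥(T 0)) inferInstance inferInstance (hTfin 0) (hTproj 0) u
  -- retyped extension principles
  have extk : ∀ γ : ↥(T (-1)) →ₗ[A] Pmod, γ ∘ₗ D2 = 0 →
      ∃ δ : ↥(T 0) →ₗ[A] Pmod, δ ∘ₗ D1 = γ := by
    rw [hD1, hD2]
    exact extend_lemma T dd hTlift (-2) Pmod
  have extxi : ∀ γ : ↥(T 0) →ₗ[A] ↥(T 0), γ ∘ₗ D1 = 0 →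
      ∃ δ : ↥(T 1) →ₗ[A] ↥(T 0), δ ∘ₗ D0 = γ := by
    rw [hD0, hD1]
    exact extend_lemma T dd hTlift (-1) (↥(T 0))
  have hπd2 : (f ∘ₗ π) ∘ₗ D2 = 0 := by
    apply LinearMap.ext; intro x
    have h1 : D1 (D2 x) = 0 := by
      have : D2 x ∈ LinearMap.ker D1 := by
        rw [← hexm2]; exact ⟨x, rfl⟩
      exact this
    have h2 : π (D2 x) = 0 := by
      apply hu_inj
      rw [huπ, h1, map_zero]
    simp only [LinearMap.coe_comp, Function.comp_apply, LinearMap.zero_apply]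
    rw [h2, map_zero]
  obtain ⟨k, hk'⟩ := extk (f ∘ₗ π) hπd2
  have hk : k ∘ₗ u = f := by
    apply LinearMap.ext; intro s
    obtain ⟨x, rfl⟩ := hπ_surj s
    have h1 := LinearMap.congr_fun hk' x
    simp only [LinearMap.coe_comp, Function.comp_apply] at h1 ⊢
    rw [huπ x]
    exact h1
  have hid : (LinearMap.id - h ∘ₗ k : ↥(T 0) →ₗ[A] ↥(T 0)) ∘ₗ D1 = 0 := by
    apply LinearMap.ext; intro x
    simp only [LinearMap.coe_comp, Function.comp_apply, LinearMap.sub_apply,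
      LinearMap.id_coe, id_eq, LinearMap.zero_apply]
    rw [← huπ x]
    have h1 := LinearMap.congr_fun hk (π x)
    have h2 := LinearMap.congr_fun hh (π x)
    simp only [LinearMap.coe_comp, Function.comp_apply] at h1 h2
    rw [h1, h2, sub_self]
  obtain ⟨xi, hxi⟩ := extxi (LinearMap.id - h ∘ₗ k) hid
  have happA : ∀ gA : G →ₗ[A] A, ∃ hA : Pmod →ₗ[A] A, hA ∘ₗ f = gA := by
    intro gA
    obtain ⟨hA, hhA⟩ := happ A inferInstance inferInstance inferInstance inferInstance gA
    exact ⟨hA, hhA⟩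
  refine main_aux G Pmod G' T dd hTfin hTproj hTex hTlift f g hf hg hexact
    D0 (show ↥(T 1) →ₗ[A] ↥(T 2) by exact (dd 1).hom) (show ↥(T 2) →ₗ[A] ↥(T 3) by exact (dd 2).hom)
    (by exact hD0) (by exact rfl) (by exact rfl) u π hu_inj (hu_range.trans hK) hπ_surj
    (by exact huπ) h k xi hh hk hxi happA
end Core

/-- Let `A` be an Artin algebra and `0 → G → P → G' → 0` an exact sequence of finitely
generated left `A`-modules where `G` is Gorenstein-projective and `G → P` is a left
`add A`-approximation of `G`. Then `G'` is Gorenstein-projective. -/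
theorem stmt2 (R₀ : Type u) [CommRing R₀] [IsArtinianRing R₀] (A : Type u) [Ring A]
    [Algebra R₀ A] [Module.Finite R₀ A]
    (G : Type u) [AddCommGroup G] [Module A G] [Module.Finite A G]
    (P : Type u) [AddCommGroup P] [Module A P] [Module.Finite A P]
    (G' : Type u) [AddCommGroup G'] [Module A G'] [Module.Finite A G']
    (f : G →ₗ[A] P) (g : P →ₗ[A] G')
    (hf : Function.Injective f) (hg : Function.Surjective g)
    (hexact : LinearMap.range f = LinearMap.ker g)
    (hG : IsGorensteinProjective A G)
    (happrox : IsLeftAddApprox A G P f) :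
    IsGorensteinProjective A G' := by

  obtain ⟨hPfin, hPproj, happ⟩ := happrox
  obtain ⟨T, dd, hTfin, hTproj, hTex, hTlift, ⟨e⟩⟩ := hG
  haveI := hPproj
  exact stmt2_core G P G' f g hf hg hexact T dd hTfin hTproj hTex hTlift (by exact e) happ
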